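/- Let S₀, S₁, S₂ be three pairwise distinct circles in the Euclidean plane ℝ², all of the same radius R > 0, that have a common point O*. For each pair of circles, let vₖ denote their second intersection point (i.e. vₖ ∈ Sᵢ ∩ Sⱼ with vₖ ≠ O*, for {i,j,k} = {0,1,2}), and assume v₀, v₁, v₂ are affinely independent. Then the circumradius of the triangle with vertices v₀, v₁, v₂ equals R, and O* is the orthocenter of this triangle. -/

import Mathlib

private lemma johnson_sq_zero {u w : ℝ} (h : u ^ 2 + w ^ 2 = 0) : u = 0 ∧ w = 0 := by
  constructor <;> [skip; skip] <;>
  · apply pow_eq_zero_iff (n := 2) (by norm_num) |>.1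
    nlinarith [sq_nonneg u, sq_nonneg w]

private lemma johnson_aux (z0 z1 t0 t1 s0 s1 : ℝ)
    (hz : z0 ^ 2 + z1 ^ 2 ≠ 0) (ht : t0 ^ 2 + t1 ^ 2 ≠ 0)
    (hzt : z0 * t0 + z1 * t1 = 0) (hsz : s0 * z0 + s1 * z1 = 0)
    (hst : s0 * t0 + s1 * t1 = 0) :
    s0 = 0 ∧ s1 = 0 := by
  have hd : (z0 * t1 - z1 * t0) ^ 2 = (z0 ^ 2 + z1 ^ 2) * (t0 ^ 2 + t1 ^ 2) := by
    nlinarith [sq_nonneg (z0 * t0 + z1 * t1)]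
  have hdne : z0 * t1 - z1 * t0 ≠ 0 := by
    intro h
    have h0 : (z0 ^ 2 + z1 ^ 2) * (t0 ^ 2 + t1 ^ 2) = 0 := by rw [← hd, h]; ring
    rcases mul_eq_zero.1 h0 with h' | h' <;> simp_all
  constructor
  · have h : s0 * (z0 * t1 - z1 * t0) = 0 := by linear_combination t1 * hsz - z1 * hst
    exact (mul_eq_zero.1 h).resolve_right hdne
  · have h : s1 * (z0 * t1 - z1 * t0) = 0 := by linear_combination z0 * hst - t0 * hsz
    exact (mul_eq_zero.1 h).resolve_right hdne

private lemma johnson_second (a b x y : EuclideanSpace ℝ (Fin 2)) (R : ℝ)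
    (hxa : dist x a = R) (hxb : dist x b = R) (hya : dist y a = R) (hyb : dist y b = R)
    (hab : a ≠ b) (hxy : x ≠ y) : x + y = a + b := by
  have key : ∀ (p q : EuclideanSpace ℝ (Fin 2)), dist p q = R →
      (p 0 - q 0) ^ 2 + (p 1 - q 1) ^ 2 = R ^ 2 := by
    intro p q h
    have h2 := congrArg (· ^ 2) h
    simp only [EuclideanSpace.dist_eq, Fin.sum_univ_two, Real.dist_eq, sq_abs] at h2
    rwa [Real.sq_sqrt (by positivity)] at h2
  have h1 := key x a hxa
  have h2 := key x b hxb
  have h3 := key y a hya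
  have h4 := key y b hyb
  have hz : (x 0 - y 0) ^ 2 + (x 1 - y 1) ^ 2 ≠ 0 := by
    intro h
    apply hxy
    obtain ⟨e0, e1⟩ := johnson_sq_zero h
    ext i
    fin_cases i <;> [exact sub_eq_zero.1 e0; exact sub_eq_zero.1 e1]
  have ht : (b 0 - a 0) ^ 2 + (b 1 - a 1) ^ 2 ≠ 0 := by
    intro h
    apply hab
    obtain ⟨e0, e1⟩ := johnson_sq_zero h
    ext i
    fin_cases i <;> [exact (sub_eq_zero.1 e0).symm; exact (sub_eq_zero.1 e1).symm]
  have hzt : (x 0 - y 0) * (b 0 - a 0) + (x 1 - y 1) * (b 1 - a 1) = 0 := by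
    linear_combination (h1 - h2 - h3 + h4) / 2
  have hsz : (x 0 + y 0 - a 0 - b 0) * (x 0 - y 0) + (x 1 + y 1 - a 1 - b 1) * (x 1 - y 1) = 0 := by
    linear_combination (h1 - h3 + h2 - h4) / 2
  have hst : (x 0 + y 0 - a 0 - b 0) * (b 0 - a 0) + (x 1 + y 1 - a 1 - b 1) * (b 1 - a 1) = 0 := by
    linear_combination (h3 - h4 + h1 - h2) / 2
  obtain ⟨hs0, hs1⟩ := johnson_aux _ _ _ _ _ _ hz ht hzt hsz hst
  ext i
  fin_cases i
  · show x 0 + y 0 = a 0 + b 0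
    linarith
  · show x 1 + y 1 = a 1 + b 1
    linarith

theorem johnson_three_circles
    (R : ℝ) (hR : 0 < R)
    (c : Fin 3 → EuclideanSpace ℝ (Fin 2))
    (hc : Function.Injective c)
    (O : EuclideanSpace ℝ (Fin 2))
    (hO : ∀ i, dist O (c i) = R)
    (v : Fin 3 → EuclideanSpace ℝ (Fin 2))
    (hv : ∀ k i, i ≠ k → dist (v k) (c i) = R)
    (hvO : ∀ k, v k ≠ O)
    (hind : AffineIndependent ℝ v) :
    (⟨v, hind⟩ : Affine.Triangle ℝ (EuclideanSpace ℝ (Fin 2))).circumradius = R ∧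
    Affine.Triangle.orthocenter (⟨v, hind⟩ : Affine.Triangle ℝ (EuclideanSpace ℝ (Fin 2))) = O := by
  have hsum : ∀ k i j : Fin 3, i ≠ k → j ≠ k → i ≠ j → v k + O = c i + c j := by
    intro k i j hik hjk hij
    exact johnson_second (c i) (c j) (v k) O R (hv k i hik) (hv k j hjk)
      (hO i) (hO j)
      (fun h => hij (hc h)) (hvO k)
  have h0 : v 0 + O = c 1 + c 2 := hsum 0 1 2 (by decide) (by decide) (by decide)
  have h1 : v 1 + O = c 0 + c 2 := hsum 1 0 2 (by decide) (by decide) (by decide)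
  have h2 : v 2 + O = c 0 + c 1 := hsum 2 0 1 (by decide) (by decide) (by decide)
  set N : EuclideanSpace ℝ (Fin 2) := c 0 + c 1 + c 2 - O - O with hN
  have hdist : ∀ k, dist (v k) N = R := by
    intro k
    have e0 : v 0 = c 1 + c 2 - O := eq_sub_of_add_eq h0
    have e1 : v 1 = c 0 + c 2 - O := eq_sub_of_add_eq h1
    have e2 : v 2 = c 0 + c 1 - O := eq_sub_of_add_eq h2
    have hkey : v k - N = O - c k := by
      fin_cases k
      · show v 0 - (c 0 + c 1 + c 2 - O - O) = O - c 0
        rw [e0]; abel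
      · show v 1 - (c 0 + c 1 + c 2 - O - O) = O - c 1
        rw [e1]; abel
      · show v 2 - (c 0 + c 1 + c 2 - O - O) = O - c 2
        rw [e2]; abel
    rw [dist_eq_norm, hkey, ← dist_eq_norm]
    exact hO k
  have hspan : affineSpan ℝ (Set.range v) = ⊤ := by
    rw [hind.affineSpan_eq_top_iff_card_eq_finrank_add_one]
    simp
  have hNmem : N ∈ affineSpan ℝ (Set.range v) := by rw [hspan]; trivial
  set t : Affine.Triangle ℝ (EuclideanSpace ℝ (Fin 2)) := ⟨v, hind⟩ with htdef
  have hpts : t.points = v := rfl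
  have hdist' : ∀ i, dist (t.points i) N = R := fun i => hdist i
  have hrad : t.circumradius = R :=
    (t.eq_circumradius_of_dist_eq (by rw [hpts]; exact hNmem) hdist').symm
  have hcen : N = t.circumcenter :=
    t.eq_circumcenter_of_dist_eq (by rw [hpts]; exact hNmem) hdist'
  refine ⟨hrad, ?_⟩
  rw [Affine.Triangle.orthocenter_eq_smul_vsub_vadd_circumcenter, ← hcen]
  have hcentroid : (Finset.univ : Finset (Fin 3)).centroid ℝ t.points =
      (3 : ℝ)⁻¹ • (v 0 + v 1 + v 2) := by
    rw [hpts, Finset.centroid_def, Finset.affineCombination_apply]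
    simp only [Finset.weightedVSubOfPoint_apply, Fin.sum_univ_three, Finset.centroidWeights_apply,
      Finset.card_univ, Fintype.card_fin, Nat.cast_ofNat, vsub_eq_sub, vadd_eq_add]
    module
  rw [hcentroid]
  have e0 : v 0 = c 1 + c 2 - O := eq_sub_of_add_eq h0
  have e1 : v 1 = c 0 + c 2 - O := eq_sub_of_add_eq h1
  have e2 : v 2 = c 0 + c 1 - O := eq_sub_of_add_eq h2
  have hvsum : v 0 + v 1 + v 2 = N + N + O := by
    rw [hN, e0, e1, e2]; abel
  rw [hvsum]
  simp only [vsub_eq_sub, vadd_eq_add]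
  module
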